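/- arXiv:2109.07704 — 3 statements merged into one kernel-verified Lean document; each statement's English description precedes it below -/
import Mathlib

section
/- Suppose for each i, the local iterate satisfies x_i^t = X_i^{t₀} − γ ∑_{τ=t₀}^{t−1} g_i^τ and the global iterate satisfies X^t = X^{t₀} − γ ∑_{τ=t₀}^{t−1} U ∑_{j=1}^N g_j^τ, where t − t₀ ≤ I − 1, each ‖g_i^τ‖² ≤ G², U = diag(1/n₁,…,1/n_M), and each g_j^τ is supported on S(j) with n_m = |{j : m ∈ S(j)}|. Then (1/N) ∑_{i=1}^N ‖x_i^t − X_i^t‖² ≤ 4γ² G² (I−1)². -/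
/-- Deviation bound between local and global iterates in FedSubAvg:
if x_i^t = X_i^{t₀} - γ∑_{τ=t₀}^{t-1} g_i^τ and
X^t = X^{t₀} - γ∑_{τ=t₀}^{t-1} U ∑_j g_j^τ with t - t₀ ≤ I - 1,
‖g_i^τ‖² ≤ G², U = diag(1/nₘ), supports S(j), then
(1/N)∑ᵢ ‖x_i^t - X_i^t‖² ≤ 4γ²G²(I-1)². -/
theorem stmt_14 {M Nn : ℕ} (γ G : ℝ) (t₀ t I : ℕ) (hI : 1 ≤ I) (ht₀ : t₀ ≤ t)
    (ht : t - t₀ ≤ I - 1)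
    (S : Fin Nn → Finset (Fin M)) (n : Fin M → ℕ)
    (hn : ∀ m, n m = (Finset.univ.filter (fun i => m ∈ S i)).card)
    (g : Fin Nn → ℕ → Fin M → ℝ)
    (hsupp : ∀ i τ m, m ∉ S i → g i τ m = 0)
    (hG : ∀ i τ, ∑ m, (g i τ m) ^ 2 ≤ G ^ 2)
    (X0 : Fin M → ℝ)
    (x : Fin Nn → Fin M → ℝ)
    (hx : ∀ i m, x i m = X0 m - γ * ∑ τ ∈ Finset.Ico t₀ t, g i τ m)
    (Xt : Fin M → ℝ)
    (hXt : ∀ m, Xt m = X0 m - γ * ∑ τ ∈ Finset.Ico t₀ t,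
      (1 / (n m : ℝ)) * ∑ i ∈ Finset.univ.filter (fun i => m ∈ S i), g i τ m) :
    (1 / (Nn : ℝ)) * ∑ i, ∑ m ∈ S i, (x i m - Xt m) ^ 2 ≤
      4 * γ ^ 2 * G ^ 2 * ((I : ℝ) - 1) ^ 2 := by
  classical
  rcases Nat.eq_zero_or_pos Nn with hN | hN
  · subst hN
    simp
    positivity
  set T := Finset.Ico t₀ t with hT
  have hG2 : (0:ℝ) ≤ G ^ 2 := sq_nonneg G
  have hKI : (T.card : ℝ) ≤ (I : ℝ) - 1 := by
    rw [hT, Nat.card_Ico]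
    have h1 : ((t - t₀ : ℕ) : ℝ) ≤ ((I - 1 : ℕ) : ℝ) := by exact_mod_cast ht
    rw [Nat.cast_sub hI] at h1
    push_cast at h1 ⊢
    linarith
  have hK0 : (0:ℝ) ≤ (T.card : ℝ) := Nat.cast_nonneg _
  set a : ℕ → Fin M → ℝ := fun τ m =>
    (1 / (n m : ℝ)) * ∑ j ∈ Finset.univ.filter (fun i => m ∈ S i), g j τ m with ha
  -- sum swap lemma
  have swap : ∀ f : Fin Nn → Fin M → ℝ,
      ∑ i, ∑ m ∈ S i, f i m
        = ∑ m, ∑ i ∈ Finset.univ.filter (fun i => m ∈ S i), f i m := by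
    intro f
    calc ∑ i, ∑ m ∈ S i, f i m
        = ∑ i, ∑ m, if m ∈ S i then f i m else 0 := by
          refine Finset.sum_congr rfl fun i _ => ?_
          rw [← Finset.sum_filter, Finset.filter_univ_mem]
      _ = ∑ m : Fin M, ∑ i, if m ∈ S i then f i m else 0 := Finset.sum_comm
      _ = _ := by
          refine Finset.sum_congr rfl fun m _ => ?_
          rw [Finset.sum_filter]
  -- per-step bound
  have key : ∀ τ, ∑ i, ∑ m ∈ S i, (a τ m - g i τ m) ^ 2
      ≤ 4 * (Nn : ℝ) * G ^ 2 := by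
    intro τ
    have hB : ∑ i, ∑ m ∈ S i, (g i τ m) ^ 2 ≤ (Nn : ℝ) * G ^ 2 := by
      calc ∑ i, ∑ m ∈ S i, (g i τ m) ^ 2 ≤ ∑ i : Fin Nn, G ^ 2 := by
            refine Finset.sum_le_sum fun i _ => ?_
            refine le_trans ?_ (hG i τ)
            exact Finset.sum_le_sum_of_subset_of_nonneg (Finset.subset_univ _)
              (fun m _ _ => sq_nonneg _)
        _ = (Nn : ℝ) * G ^ 2 := by simp [Finset.card_univ]
    have hA : ∑ i, ∑ m ∈ S i, (a τ m) ^ 2 ≤ (Nn : ℝ) * G ^ 2 := by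
      rw [swap (fun i m => (a τ m) ^ 2)]
      have hstep : ∀ m : Fin M,
          ∑ i ∈ Finset.univ.filter (fun i => m ∈ S i), (a τ m) ^ 2
            ≤ ∑ j ∈ Finset.univ.filter (fun i => m ∈ S i), (g j τ m) ^ 2 := by
        intro m
        set s := Finset.univ.filter (fun i : Fin Nn => m ∈ S i) with hs
        rw [Finset.sum_const, nsmul_eq_mul]
        rcases Nat.eq_zero_or_pos s.card with hc | hc
        · rw [hc]
          simp only [Nat.cast_zero, zero_mul]
          exact Finset.sum_nonneg fun j _ => sq_nonneg _
        · have hc' : (0:ℝ) < (s.card : ℝ) := by exact_mod_cast hc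
          have hcs : (∑ j ∈ s, g j τ m) ^ 2 ≤ (s.card : ℝ) * ∑ j ∈ s, (g j τ m) ^ 2 :=
            sq_sum_le_card_mul_sum_sq
          have hnm : (n m : ℝ) = (s.card : ℝ) := by rw [hn m]
          have hrw : (s.card : ℝ) * (a τ m) ^ 2
              = (∑ j ∈ s, g j τ m) ^ 2 / (s.card : ℝ) := by
            rw [ha]
            simp only
            rw [hnm, ← hs]
            field_simp
          rw [hrw, div_le_iff₀ hc']
          calc (∑ j ∈ s, g j τ m) ^ 2 ≤ (s.card : ℝ) * ∑ j ∈ s, (g j τ m) ^ 2 := hcs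
            _ = (∑ j ∈ s, (g j τ m) ^ 2) * (s.card : ℝ) := by ring
      calc ∑ m, ∑ i ∈ Finset.univ.filter (fun i => m ∈ S i), (a τ m) ^ 2
          ≤ ∑ m, ∑ j ∈ Finset.univ.filter (fun i => m ∈ S i), (g j τ m) ^ 2 :=
            Finset.sum_le_sum fun m _ => hstep m
        _ = ∑ j, ∑ m ∈ S j, (g j τ m) ^ 2 := (swap (fun j m => (g j τ m) ^ 2)).symm
        _ ≤ (Nn : ℝ) * G ^ 2 := hB
    calc ∑ i, ∑ m ∈ S i, (a τ m - g i τ m) ^ 2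
        ≤ ∑ i, ∑ m ∈ S i, (2 * (a τ m) ^ 2 + 2 * (g i τ m) ^ 2) := by
          refine Finset.sum_le_sum fun i _ => Finset.sum_le_sum fun m _ => ?_
          nlinarith [sq_nonneg (a τ m + g i τ m)]
      _ = 2 * (∑ i, ∑ m ∈ S i, (a τ m) ^ 2) + 2 * (∑ i, ∑ m ∈ S i, (g i τ m) ^ 2) := by
          simp [Finset.sum_add_distrib, Finset.mul_sum]
      _ ≤ 2 * ((Nn : ℝ) * G ^ 2) + 2 * ((Nn : ℝ) * G ^ 2) := by
          gcongr
      _ = 4 * (Nn : ℝ) * G ^ 2 := by ring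
  -- rewrite the difference
  have hdiff : ∀ i, ∀ m ∈ S i, (x i m - Xt m) ^ 2
      = γ ^ 2 * (∑ τ ∈ T, (a τ m - g i τ m)) ^ 2 := by
    intro i m _
    rw [hx, hXt]
    rw [Finset.sum_sub_distrib]
    ring
  have main : ∑ i, ∑ m ∈ S i, (x i m - Xt m) ^ 2
      ≤ γ ^ 2 * (T.card : ℝ) ^ 2 * (4 * (Nn : ℝ) * G ^ 2) := by
    calc ∑ i, ∑ m ∈ S i, (x i m - Xt m) ^ 2
        = γ ^ 2 * ∑ i, ∑ m ∈ S i, (∑ τ ∈ T, (a τ m - g i τ m)) ^ 2 := by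
          rw [Finset.mul_sum]
          refine Finset.sum_congr rfl fun i _ => ?_
          rw [Finset.mul_sum]
          exact Finset.sum_congr rfl fun m hm => hdiff i m hm
      _ ≤ γ ^ 2 * ∑ i, ∑ m ∈ S i, ((T.card : ℝ) * ∑ τ ∈ T, (a τ m - g i τ m) ^ 2) := by
          refine mul_le_mul_of_nonneg_left ?_ (sq_nonneg γ)
          refine Finset.sum_le_sum fun i _ => Finset.sum_le_sum fun m _ => ?_
          exact sq_sum_le_card_mul_sum_sq
      _ = γ ^ 2 * ((T.card : ℝ) * ∑ τ ∈ T, ∑ i, ∑ m ∈ S i, (a τ m - g i τ m) ^ 2) := by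
          congr 1
          have swapτ : ∑ i, ∑ m ∈ S i, ∑ τ ∈ T, (a τ m - g i τ m) ^ 2
              = ∑ τ ∈ T, ∑ i, ∑ m ∈ S i, (a τ m - g i τ m) ^ 2 :=
            (Finset.sum_congr rfl fun i _ => Finset.sum_comm).trans Finset.sum_comm
          rw [← swapτ, Finset.mul_sum]
          exact Finset.sum_congr rfl fun i _ => (Finset.mul_sum _ _ _).symm
      _ ≤ γ ^ 2 * ((T.card : ℝ) * ∑ τ ∈ T, 4 * (Nn : ℝ) * G ^ 2) := by
          refine mul_le_mul_of_nonneg_left ?_ (sq_nonneg γ)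
          refine mul_le_mul_of_nonneg_left ?_ hK0
          exact Finset.sum_le_sum fun τ _ => key τ
      _ = γ ^ 2 * (T.card : ℝ) ^ 2 * (4 * (Nn : ℝ) * G ^ 2) := by
          rw [Finset.sum_const, nsmul_eq_mul]
          ring
  have hNpos : (0:ℝ) < (Nn : ℝ) := by exact_mod_cast hN
  have : (1 / (Nn : ℝ)) * ∑ i, ∑ m ∈ S i, (x i m - Xt m) ^ 2
      ≤ (1 / (Nn : ℝ)) * (γ ^ 2 * (T.card : ℝ) ^ 2 * (4 * (Nn : ℝ) * G ^ 2)) := by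
    exact mul_le_mul_of_nonneg_left main (by positivity)
  refine this.trans ?_
  have heq : (1 / (Nn : ℝ)) * (γ ^ 2 * (T.card : ℝ) ^ 2 * (4 * (Nn : ℝ) * G ^ 2))
      = 4 * γ ^ 2 * G ^ 2 * (T.card : ℝ) ^ 2 := by
    field_simp
  rw [heq]
  have hI1 : (0:ℝ) ≤ (I:ℝ) - 1 := by
    have : (1:ℝ) ≤ (I:ℝ) := by exact_mod_cast hI
    linarith
  have h2 : (T.card : ℝ) ^ 2 ≤ ((I:ℝ) - 1) ^ 2 := by nlinarith
  have h3 := mul_le_mul_of_nonneg_left h2 (by positivity : (0:ℝ) ≤ 4 * γ ^ 2 * G ^ 2)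
  linarith
end

section
/- Let f = (1/N) ∑_{i=1}^N fᵢ, where each fᵢ : ℝ^{S(i)} → ℝ depends only on coordinates in S(i) ⊆ {1,…,M} and is such that, at a point X, the restricted Hessian bound implies fᵢ(Y_{S(i)}) ≥ fᵢ(X_{S(i)}) + ⟨Y_{S(i)} − X_{S(i)}, ∇fᵢ(X_{S(i)})⟩ + (μᵢ/2)‖Y_{S(i)} − X_{S(i)}‖² for all Y, with ∑_{i: m ∈ S(i)} μᵢ ≥ n_m μ₀ for every m, where n_m = |{i : m ∈ S(i)}| and μ₀ > 0. Then for every Y: f(Y) ≥ f(X) − (1/(2μ₀)) ∇f(X)ᵀ D ∇f(X), where D = diag(N/n₁, …, N/n_M). In particular, if ∇f(X)ᵀ D ∇f(X) ≤ ε then f(X) ≤ inf_Y f(Y) + ε/(2μ₀). -/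
/-- Restricted strong convexity bound for federated submodel objectives:
if f = (1/N)∑ᵢ fᵢ, each fᵢ depends only on coordinates in S(i) and satisfies a
μᵢ-strong convexity inequality at X on its support, with
∑_{i: m∈S(i)} μᵢ ≥ nₘ μ₀ for each coordinate m, then for all Y:
f(Y) ≥ f(X) - (1/(2μ₀)) ∇f(X)ᵀ D ∇f(X) with D = diag(N/nₘ); in particular
∇f(X)ᵀ D ∇f(X) ≤ ε implies f(X) ≤ inf f + ε/(2μ₀). -/
theorem stmt_17 {M N : ℕ} (μ₀ ε : ℝ) (hμ₀ : 0 < μ₀)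
    (S : Fin N → Finset (Fin M)) (n : Fin M → ℕ)
    (hn : ∀ m, n m = (Finset.univ.filter (fun i => m ∈ S i)).card)
    (fi : Fin N → (Fin M → ℝ) → ℝ)
    (hdep : ∀ i Y Y', (∀ m ∈ S i, Y m = Y' m) → fi i Y = fi i Y')
    (gi : Fin N → Fin M → ℝ) (hgsupp : ∀ i m, m ∉ S i → gi i m = 0)
    (μi : Fin N → ℝ)
    (hμs : ∀ m, (n m : ℝ) * μ₀ ≤ ∑ i ∈ Finset.univ.filter (fun i => m ∈ S i), μi i)
    (X : Fin M → ℝ)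
    (hsc : ∀ i Y, fi i X + (∑ m ∈ S i, gi i m * (Y m - X m))
        + (μi i / 2) * ∑ m ∈ S i, (Y m - X m) ^ 2 ≤ fi i Y)
    (f : (Fin M → ℝ) → ℝ) (hf : ∀ x, f x = (1 / (N : ℝ)) * ∑ i, fi i x)
    (gradF : Fin M → ℝ)
    (hgrad : ∀ m, gradF m =
      (1 / (N : ℝ)) * ∑ i ∈ Finset.univ.filter (fun i => m ∈ S i), gi i m) :
    (∀ Y, f X - (1 / (2 * μ₀)) * ∑ m, ((N : ℝ) / (n m : ℝ)) * (gradF m) ^ 2 ≤ f Y) ∧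
    ((∑ m, ((N : ℝ) / (n m : ℝ)) * (gradF m) ^ 2 ≤ ε) →
      ∀ Y, f X ≤ f Y + ε / (2 * μ₀)) := by
  -- main inequality
  have main : ∀ Y, f X - (1 / (2 * μ₀)) * ∑ m, ((N : ℝ) / (n m : ℝ)) * (gradF m) ^ 2 ≤ f Y := by
    intro Y
    rcases Nat.eq_zero_or_pos N with hN | hN
    · subst hN
      have hg : ∀ m, gradF m = 0 := by
        intro m; rw [hgrad m]; simp
      simp [hf, hg]
    · have hNR : (0:ℝ) < (N:ℝ) := by exact_mod_cast hN
      set G : Fin M → ℝ := fun m => ∑ i ∈ Finset.univ.filter (fun i => m ∈ S i), gi i m with hG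
      set A : Fin M → ℝ := fun m => ∑ i ∈ Finset.univ.filter (fun i => m ∈ S i), μi i with hA
      -- swap sums lemma
      have swap : ∀ (h : Fin N → Fin M → ℝ),
          ∑ i, ∑ m ∈ S i, h i m
            = ∑ m, ∑ i ∈ Finset.univ.filter (fun i => m ∈ S i), h i m := by
        intro h
        simp_rw [Finset.sum_filter]
        rw [Finset.sum_comm]
        refine Finset.sum_congr rfl fun i _ => ?_
        rw [← Finset.sum_filter, Finset.filter_mem_eq_inter, Finset.univ_inter]
      have key : (∑ i, fi i X)
          + ∑ m, (G m * (Y m - X m) + (A m / 2) * (Y m - X m) ^ 2)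
          ≤ ∑ i, fi i Y := by
        have h1 : ∑ i, (fi i X + (∑ m ∈ S i, gi i m * (Y m - X m))
            + (μi i / 2) * ∑ m ∈ S i, (Y m - X m) ^ 2) ≤ ∑ i, fi i Y :=
          Finset.sum_le_sum fun i _ => hsc i Y
        have e : ∑ i, (fi i X + (∑ m ∈ S i, gi i m * (Y m - X m))
            + (μi i / 2) * ∑ m ∈ S i, (Y m - X m) ^ 2)
            = (∑ i, fi i X)
              + ∑ m, (G m * (Y m - X m) + (A m / 2) * (Y m - X m) ^ 2) := by
          rw [Finset.sum_add_distrib, Finset.sum_add_distrib, add_assoc]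
          congr 1
          have e1 : ∑ i, ∑ m ∈ S i, gi i m * (Y m - X m)
              = ∑ m, G m * (Y m - X m) := by
            rw [swap (fun i m => gi i m * (Y m - X m))]
            exact Finset.sum_congr rfl fun m _ => by rw [hG, Finset.sum_mul]
          have e2 : ∑ i, (μi i / 2) * ∑ m ∈ S i, (Y m - X m) ^ 2
              = ∑ m, (A m / 2) * (Y m - X m) ^ 2 := by
            have : ∀ i, (μi i / 2) * ∑ m ∈ S i, (Y m - X m) ^ 2
                = ∑ m ∈ S i, (μi i / 2) * (Y m - X m) ^ 2 := fun i =>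
              Finset.mul_sum _ _ _
            simp_rw [this]
            rw [swap (fun i m => (μi i / 2) * (Y m - X m) ^ 2)]
            refine Finset.sum_congr rfl fun m _ => ?_
            rw [hA, Finset.sum_div, Finset.sum_mul]
          rw [e1, e2, ← Finset.sum_add_distrib]
        linarith [e ▸ h1]
      -- per-coordinate bound
      have per : ∀ m, -((1 / (2 * μ₀)) * (((N : ℝ) / (n m : ℝ)) * (gradF m) ^ 2))
          ≤ (1 / (N:ℝ)) * (G m * (Y m - X m) + (A m / 2) * (Y m - X m) ^ 2) := by
        intro m
        rcases Nat.eq_zero_or_pos (n m) with hnm | hnm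
        · have hfil : (Finset.univ.filter (fun i => m ∈ S i)) = ∅ := by
            have := hn m; rw [hnm] at this
            exact Finset.card_eq_zero.mp this.symm
          have hGm : G m = 0 := by rw [hG]; simp [hfil]
          have hAm : A m = 0 := by rw [hA]; simp [hfil]
          have hgm : gradF m = 0 := by rw [hgrad m]; simp [hfil]
          simp [hGm, hAm, hgm]
        · have hnR : (0:ℝ) < (n m : ℝ) := by exact_mod_cast hnm
          have hAge : (n m : ℝ) * μ₀ ≤ A m := hμs m
          have hGm' : G m = ∑ i ∈ Finset.univ.filter (fun i => m ∈ S i), gi i m := rfl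
          have hgm : gradF m = G m / N := by rw [hgrad m, ← hGm']; ring
          rw [hgm]
          set t := Y m - X m
          rw [div_pow, ← sub_nonneg]
          have h2 : (1 / (N:ℝ)) * (G m * t + (A m / 2) * t ^ 2)
              - -((1 / (2 * μ₀)) * (((N : ℝ) / (n m : ℝ)) * (G m ^ 2 / (N:ℝ)^2)))
              = (1 / (N:ℝ)) * ((G m * t + ((n m : ℝ) * μ₀ / 2) * t ^ 2
                  + G m ^ 2 / (2 * ((n m : ℝ) * μ₀)))
                + ((A m - (n m : ℝ) * μ₀) / 2) * t ^ 2) := by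
            field_simp
            ring
          rw [h2]
          have hc : (0:ℝ) < (n m : ℝ) * μ₀ := mul_pos hnR hμ₀
          have e1 : G m * t + ((n m : ℝ) * μ₀ / 2) * t ^ 2
              + G m ^ 2 / (2 * ((n m : ℝ) * μ₀))
              = ((n m : ℝ) * μ₀ * t + G m) ^ 2 / (2 * ((n m : ℝ) * μ₀)) := by
            field_simp
            ring
          apply mul_nonneg (by positivity)
          apply add_nonneg
          · rw [e1]; positivity
          · apply mul_nonneg
            · apply div_nonneg _ (by norm_num)
              linarith
            · positivity
      have sumper : -((1 / (2 * μ₀)) * ∑ m, ((N : ℝ) / (n m : ℝ)) * (gradF m) ^ 2)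
          ≤ (1 / (N:ℝ)) * ∑ m, (G m * (Y m - X m) + (A m / 2) * (Y m - X m) ^ 2) := by
        rw [Finset.mul_sum, Finset.mul_sum, ← Finset.sum_neg_distrib]
        exact Finset.sum_le_sum fun m _ => per m
      rw [hf, hf]
      have hkey' := mul_le_mul_of_nonneg_left key (by positivity : (0:ℝ) ≤ 1/(N:ℝ))
      rw [mul_add] at hkey'
      linarith [sumper, hkey']
  refine ⟨main, fun hε Y => ?_⟩
  have h1 := main Y
  have h2 : (1 / (2 * μ₀)) * ∑ m, ((N : ℝ) / (n m : ℝ)) * (gradF m) ^ 2 ≤ ε / (2 * μ₀) := by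
    rw [div_eq_mul_one_div ε]
    rw [mul_comm ε]
    apply mul_le_mul_of_nonneg_left hε (by positivity)
  linarith
end

section
/- Let Λ = diag(n₁/N, …, n_M/N) with each n_m ∈ {1, …, N}, and let Hᵢ (i = 1,…,N) be symmetric matrices, each supported on the principal submatrix indexed by S(i) (zero outside), with ρ₁ I_{S(i)} ⪯ Hᵢ ⪯ ρ₂ I_{S(i)} on its support for i in a set of 'good' clients and −ρ₂ I_{S(i)} ⪯ Hᵢ ⪯ −ρ₁ I_{S(i)} otherwise, where for each coordinate m at most α·n_m of the clients containing m are not good and (1−α)ρ₁ − αρ₂ > 0. Then H = (1/N) ∑ᵢ Hᵢ satisfies (ρ₁ − α(ρ₁+ρ₂)) Λ ⪯ H ⪯ ρ₂ Λ. -/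
open Matrix Finset

lemma psd_smul {M : ℕ} {c : ℝ} (hc : 0 ≤ c) {A : Matrix (Fin M) (Fin M) ℝ}
    (hA : A.PosSemidef) : (c • A).PosSemidef := by
  constructor
  · unfold Matrix.IsHermitian
    rw [conjTranspose_smul, hA.1]
    simp
  · intro x
    have := hA.2 x
    simpa [Matrix.smul_mulVec, dotProduct_smul, Finsupp.mul_sum, mul_assoc, mul_left_comm] using mul_nonneg hc this

lemma psd_sum {M N : ℕ} (f : Fin N → Matrix (Fin M) (Fin M) ℝ)
    (h : ∀ i, (f i).PosSemidef) : (∑ i, f i).PosSemidef := by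
  classical
  refine Finset.sum_induction f _ (fun a b ha hb => ha.add hb) ?_ (fun i _ => h i)
  constructor
  · simp [Matrix.IsHermitian]
  · intro x; simp

/-- Aggregated Hessian bound under feature heat dispersion: if each local
Hessian Hᵢ is supported on S(i), with ρ₁ I_{S(i)} ⪯ Hᵢ ⪯ ρ₂ I_{S(i)} for good
clients and -ρ₂ I_{S(i)} ⪯ Hᵢ ⪯ -ρ₁ I_{S(i)} for bad ones, and for each
coordinate m at most α nₘ of the clients containing m are bad, with
(1-α)ρ₁ - αρ₂ > 0, then H = (1/N)∑ᵢ Hᵢ satisfies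
(ρ₁ - α(ρ₁+ρ₂)) Λ ⪯ H ⪯ ρ₂ Λ with Λ = diag(nₘ/N). -/
theorem stmt_19 {M N : ℕ} (ρ₁ ρ₂ α : ℝ) (hρ₁ : 0 < ρ₁) (hρ₂ : ρ₁ < ρ₂)
    (hα : 0 ≤ α) (hαρ : 0 < (1 - α) * ρ₁ - α * ρ₂)
    (S : Fin N → Finset (Fin M)) (n : Fin M → ℕ)
    (hn : ∀ m, n m = (Finset.univ.filter (fun i => m ∈ S i)).card)
    (Good : Finset (Fin N))
    (Hi : Fin N → Matrix (Fin M) (Fin M) ℝ)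
    (hsym : ∀ i, (Hi i).IsHermitian)
    (hsupp : ∀ i m m', (m ∉ S i ∨ m' ∉ S i) → Hi i m m' = 0)
    (hgood : ∀ i ∈ Good,
      (Hi i - ρ₁ • Matrix.diagonal (fun m => if m ∈ S i then (1 : ℝ) else 0)).PosSemidef ∧
      (ρ₂ • Matrix.diagonal (fun m => if m ∈ S i then (1 : ℝ) else 0) - Hi i).PosSemidef)
    (hbad : ∀ i ∉ Good,
      (-(ρ₁ • Matrix.diagonal (fun m => if m ∈ S i then (1 : ℝ) else 0)) - Hi i).PosSemidef ∧
      (Hi i + ρ₂ • Matrix.diagonal (fun m => if m ∈ S i then (1 : ℝ) else 0)).PosSemidef)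
    (hcount : ∀ m,
      (((Finset.univ.filter (fun i => m ∈ S i ∧ i ∉ Good)).card : ℝ)) ≤ α * (n m : ℝ))
    (H : Matrix (Fin M) (Fin M) ℝ) (hH : H = (1 / (N : ℝ)) • ∑ i, Hi i) :
    (H - (ρ₁ - α * (ρ₁ + ρ₂)) • Matrix.diagonal (fun m => (n m : ℝ) / (N : ℝ))).PosSemidef ∧
    (ρ₂ • Matrix.diagonal (fun m => (n m : ℝ) / (N : ℝ)) - H).PosSemidef := by
  classical
  have hNnn : (0:ℝ) ≤ 1 / (N : ℝ) := by positivity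
  set g : Fin M → ℕ := fun m => (Finset.univ.filter (fun i => m ∈ S i ∧ i ∈ Good)).card with hg
  set b : Fin M → ℕ := fun m => (Finset.univ.filter (fun i => m ∈ S i ∧ i ∉ Good)).card with hb
  have hgb : ∀ m, g m + b m = n m := by
    intro m
    rw [hn m, hg, hb]
    simp only
    rw [← Finset.filter_filter, ← Finset.filter_filter]
    exact Finset.card_filter_add_card_filter_not _
  constructor
  · -- lower bound
    set c : ℝ := ρ₁ - α * (ρ₁ + ρ₂) with hc
    set D : Fin N → Matrix (Fin M) (Fin M) ℝ := fun i =>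
      if i ∈ Good then Hi i - ρ₁ • Matrix.diagonal (fun m => if m ∈ S i then (1 : ℝ) else 0)
      else Hi i + ρ₂ • Matrix.diagonal (fun m => if m ∈ S i then (1 : ℝ) else 0) with hD
    set e : Fin M → ℝ := fun m =>
      (ρ₁ * (g m : ℝ) - ρ₂ * (b m : ℝ) - c * (n m : ℝ)) / N with he
    have hDsum : ∑ i, D i = (∑ i, Hi i) -
        Matrix.diagonal (fun m => ρ₁ * (g m : ℝ) - ρ₂ * (b m : ℝ)) := by
      ext m m'
      rcases eq_or_ne m m' with rfl | hmm
      · simp only [Matrix.sum_apply, Matrix.sub_apply, Matrix.diagonal_apply_eq, hD]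
        have hsplit : ∀ i : Fin N,
            (if i ∈ Good then Hi i - ρ₁ • Matrix.diagonal (fun m => if m ∈ S i then (1 : ℝ) else 0)
             else Hi i + ρ₂ • Matrix.diagonal (fun m => if m ∈ S i then (1 : ℝ) else 0)) m m
            = Hi i m m - ((if m ∈ S i ∧ i ∈ Good then ρ₁ else 0)
                + (if m ∈ S i ∧ i ∉ Good then -ρ₂ else 0)) := by
          intro i
          by_cases hG : i ∈ Good <;> by_cases hS : m ∈ S i <;>
            simp [hG, hS, Matrix.sub_apply, Matrix.add_apply, Matrix.smul_apply,
              Matrix.diagonal_apply_eq] <;> ring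
        rw [Finset.sum_congr rfl (fun i _ => hsplit i), Finset.sum_sub_distrib]
        congr 1
        rw [Finset.sum_add_distrib]
        rw [← Finset.sum_filter, ← Finset.sum_filter]
        simp [Finset.sum_const, hg, hb, nsmul_eq_mul]
        ring
      · simp only [Matrix.sum_apply, Matrix.sub_apply, Matrix.diagonal_apply_ne _ hmm, hD,
          sub_zero]
        refine Finset.sum_congr rfl fun i _ => ?_
        by_cases hG : i ∈ Good <;>
          simp [hG, Matrix.sub_apply, Matrix.add_apply, Matrix.smul_apply,
            Matrix.diagonal_apply_ne _ hmm]
    have hkey : H - c • Matrix.diagonal (fun m => (n m : ℝ) / (N : ℝ))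
        = (1 / (N : ℝ)) • (∑ i, D i) + Matrix.diagonal e := by
      rw [hDsum, hH]
      ext m m'
      rcases eq_or_ne m m' with rfl | hmm
      · simp only [Matrix.sub_apply, Matrix.add_apply, Matrix.smul_apply,
          Matrix.diagonal_apply_eq, he, smul_eq_mul]
        field_simp
        ring
      · simp [Matrix.sub_apply, Matrix.add_apply, Matrix.smul_apply,
          Matrix.diagonal_apply_ne _ hmm]
    rw [hkey]
    apply Matrix.PosSemidef.add
    · refine psd_smul hNnn (psd_sum _ fun i => ?_)
      by_cases hG : i ∈ Good
      · simpa [hD, hG] using (hgood i hG).1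
      · simpa [hD, hG] using (hbad i hG).2
    · refine Matrix.PosSemidef.diagonal fun m => ?_
      have h1 := hcount m
      have h2 : (g m : ℝ) + (b m : ℝ) = (n m : ℝ) := by
        exact_mod_cast congrArg (Nat.cast : ℕ → ℝ) (hgb m)
      have hbm : (b m : ℝ) ≤ α * (n m : ℝ) := by simpa [hb] using h1
      have : 0 ≤ ρ₁ * (g m : ℝ) - ρ₂ * (b m : ℝ) - c * (n m : ℝ) := by
        have : ρ₁ * (g m : ℝ) - ρ₂ * (b m : ℝ) - c * (n m : ℝ)
            = (ρ₁ + ρ₂) * (α * (n m : ℝ) - (b m : ℝ)) := by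
          rw [hc]; nlinarith [h2]
        rw [this]
        apply mul_nonneg (by linarith) (by linarith)
      exact div_nonneg this (Nat.cast_nonneg N)
  · -- upper bound
    set F : Fin N → Matrix (Fin M) (Fin M) ℝ := fun i =>
      ρ₂ • Matrix.diagonal (fun m => if m ∈ S i then (1 : ℝ) else 0) - Hi i with hF
    have hFsum : ∑ i, F i = ρ₂ • Matrix.diagonal (fun m => (n m : ℝ)) - ∑ i, Hi i := by
      ext m m'
      rcases eq_or_ne m m' with rfl | hmm
      · simp only [Matrix.sum_apply, Matrix.sub_apply, Matrix.smul_apply,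
          Matrix.diagonal_apply_eq, hF, smul_eq_mul]
        rw [Finset.sum_sub_distrib]
        congr 1
        rw [← Finset.mul_sum]
        congr 1
        rw [← Finset.sum_filter, Finset.sum_const, hn m]
        simp
      · simp [Matrix.sum_apply, Matrix.sub_apply, Matrix.smul_apply,
          Matrix.diagonal_apply_ne _ hmm, hF]
    have hkey : ρ₂ • Matrix.diagonal (fun m => (n m : ℝ) / (N : ℝ)) - H
        = (1 / (N : ℝ)) • (∑ i, F i) := by
      rw [hFsum, hH]
      ext m m'
      rcases eq_or_ne m m' with rfl | hmm
      · simp only [Matrix.sub_apply, Matrix.smul_apply, Matrix.diagonal_apply_eq, smul_eq_mul]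
        ring
      · simp [Matrix.sub_apply, Matrix.smul_apply, Matrix.diagonal_apply_ne _ hmm]
    rw [hkey]
    refine psd_smul hNnn (psd_sum _ fun i => ?_)
    by_cases hG : i ∈ Good
    · exact (hgood i hG).2
    · have heq : F i = (ρ₁ + ρ₂) • Matrix.diagonal (fun m => if m ∈ S i then (1 : ℝ) else 0)
          + (-(ρ₁ • Matrix.diagonal (fun m => if m ∈ S i then (1 : ℝ) else 0)) - Hi i) := by
        rw [hF]
        simp only
        rw [add_smul]
        abel
      rw [heq]
      apply Matrix.PosSemidef.add
      · exact psd_smul (by linarith) (Matrix.PosSemidef.diagonal fun m => by positivity)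
      · exact (hbad i hG).1
end
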